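/- If a hereditary family H is compressed with respect to an element x of the union of H, then H⟨x⟩ is a largest intersecting sub-family of H. -/

import Mathlib

open Finset FinsetFamily

theorem snevily_star_property {α : Type*} [DecidableEq α]
    (H : Finset (Finset α)) (x : α)
    (hH : ∀ A ∈ H, ∀ B ⊆ A, B ∈ H)
    (hcomp : ∀ F ∈ H, ∀ y ∈ F, x ∉ F → insert x (F.erase y) ∈ H)
    (hx : ∃ F ∈ H, x ∈ F) :
    ∀ 𝒜 ⊆ H, (∀ A ∈ 𝒜, ∀ B ∈ 𝒜, (A ∩ B).Nonempty) →
      𝒜.card ≤ (H.filter (fun A => x ∈ A)).card := by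
  intro 𝒜 h𝒜 hint
  classical
  set A1 : Finset (Finset α) := 𝒜.filter (fun A => x ∈ A) with hA1
  set A0 : Finset (Finset α) := 𝒜.filter (fun A => x ∉ A) with hA0
  -- Every difference of two sets in A0 avoids x
  have hx0 : ∀ G ∈ A0 \\ A0, x ∉ G := by
    rw [forall_mem_diffs]
    intro A hA B hB
    simp only [hA0, mem_filter] at hA
    simp only [mem_sdiff]
    exact fun h => hA.2 h.1
  -- `insert x` of every difference is in the star, but not in 𝒜
  have key : ∀ G ∈ A0 \\ A0,
      insert x G ∈ H.filter (fun A => x ∈ A) ∧ insert x G ∉ 𝒜 := by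
    rw [forall_mem_diffs]
    intro A hA B hB
    simp only [hA0, mem_filter] at hA hB
    obtain ⟨y, hy⟩ := hint A hA.1 B hB.1
    rw [mem_inter] at hy
    constructor
    · rw [mem_filter]
      refine ⟨hH _ (hcomp A (h𝒜 hA.1) y hy.1 hA.2) _ ?_, mem_insert_self _ _⟩
      intro z hz
      rcases mem_insert.1 hz with rfl | hz
      · exact mem_insert_self _ _
      · rw [mem_sdiff] at hz
        exact mem_insert_of_mem (mem_erase.2 ⟨fun h => hz.2 (h ▸ hy.2), hz.1⟩)
    · intro hmem
      obtain ⟨z, hz⟩ := hint _ hmem B hB.1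
      rw [mem_inter] at hz
      rcases mem_insert.1 hz.1 with rfl | hz1
      · exact hB.2 hz.2
      · exact (mem_sdiff.1 hz1).2 hz.2
  set T : Finset (Finset α) := (A0 \\ A0).image (insert x) with hT
  have hTcard : T.card = (A0 \\ A0).card := by
    refine card_image_of_injOn ?_
    intro G hG G' hG' h
    have := congrArg (fun s => erase s x) h
    simpa [erase_insert (hx0 G hG), erase_insert (hx0 G' hG')] using this
  have hdisj : Disjoint A1 T := by
    rw [disjoint_left]
    intro F hF hFT
    obtain ⟨G, hG, rfl⟩ := mem_image.1 hFT
    exact (key G hG).2 (mem_filter.1 hF).1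
  have hsub : A1 ∪ T ⊆ H.filter (fun A => x ∈ A) := by
    intro F hF
    rcases mem_union.1 hF with hF | hF
    · rw [mem_filter] at hF ⊢
      exact ⟨h𝒜 hF.1, hF.2⟩
    · obtain ⟨G, hG, rfl⟩ := mem_image.1 hF
      exact (key G hG).1
  calc 𝒜.card = A1.card + A0.card := (card_filter_add_card_filter_not _).symm
    _ ≤ A1.card + (A0 \\ A0).card := by
        exact Nat.add_le_add_left A0.card_le_card_diffs _
    _ = A1.card + T.card := by rw [hTcard]
    _ = (A1 ∪ T).card := (card_union_of_disjoint hdisj).symm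
    _ ≤ _ := card_le_card hsub
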